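/- arXiv:0805.0080 — 5 statements merged into one kernel-verified Lean document; each statement's English description precedes it below -/
import Mathlib

section
/- Let F ∈ GL(d,ℝ) with V² = F Fᵀ, K = det F, S symmetric with div-free property irrelevant pointwise, and ρ = K S V⁻² S where S is symmetric invertible. For a unit vector n, the pentamode phase speed satisfies v² = K n·(S ρ⁻¹ S n) = n·V² n = |Fᵀ n|², and the wave velocity c = v⁻¹ V² n can be written c = F N where N = Fᵀ n / |Fᵀ n| is a unit vector. In particular v and c depend only on F and not on S. -/
open Matrix

/-- For the PM-IC cloak with `V² = F Fᵀ`, `K = det F > 0`,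
`ρ = K S V⁻² S` (`S` symmetric invertible), and a unit vector `n`, the phase speed
satisfies `v² = K n·(S ρ⁻¹ S n) = n·V² n = |Fᵀ n|²`, and the wave velocity
`c = v⁻¹ V² n` equals `F N` where `N = Fᵀ n / |Fᵀ n|` is a unit vector.  In
particular `v` and `c` depend only on `F` and not on `S`. -/
theorem pmic_speeds_independent_of_S {d : ℕ} (F : Matrix (Fin d) (Fin d) ℝ)
    (hF : IsUnit F) (hdet : 0 < F.det)
    (V2 : Matrix (Fin d) (Fin d) ℝ) (hV2 : V2 = F * Fᵀ)
    (K : ℝ) (hK : K = F.det)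
    (S : Matrix (Fin d) (Fin d) ℝ) (hS : S.IsSymm) (hSinv : IsUnit S)
    (ρ : Matrix (Fin d) (Fin d) ℝ) (hρ : ρ = K • (S * V2⁻¹ * S))
    (n : Fin d → ℝ) (hn : n ⬝ᵥ n = 1)
    (v : ℝ) (hv : v = Real.sqrt (K * (n ⬝ᵥ (S * ρ⁻¹ * S).mulVec n)))
    (c : Fin d → ℝ) (hc : c = v⁻¹ • V2.mulVec n)
    (N : Fin d → ℝ) (hN : N = (Real.sqrt (Fᵀ.mulVec n ⬝ᵥ Fᵀ.mulVec n))⁻¹ • Fᵀ.mulVec n) :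
    v ^ 2 = K * (n ⬝ᵥ (S * ρ⁻¹ * S).mulVec n) ∧
    v ^ 2 = n ⬝ᵥ V2.mulVec n ∧
    v ^ 2 = Fᵀ.mulVec n ⬝ᵥ Fᵀ.mulVec n ∧
    N ⬝ᵥ N = 1 ∧
    c = F.mulVec N := by
  have hKne : K ≠ 0 := by rw [hK]; exact ne_of_gt hdet
  have hSdet : IsUnit S.det := (Matrix.isUnit_iff_isUnit_det S).mp hSinv
  have hSS : S * S⁻¹ = 1 := Matrix.mul_nonsing_inv S hSdet
  have hSS' : S⁻¹ * S = 1 := Matrix.nonsing_inv_mul S hSdet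
  have hV2det : IsUnit V2.det := by
    rw [hV2, Matrix.det_mul, Matrix.det_transpose]
    exact isUnit_iff_ne_zero.mpr (ne_of_gt (mul_pos hdet hdet))
  have hV2inv : V2⁻¹ * V2 = 1 := Matrix.nonsing_inv_mul V2 hV2det
  -- key: ρ⁻¹ = K⁻¹ • (S⁻¹ * V2 * S⁻¹)
  have hρinv : ρ⁻¹ = K⁻¹ • (S⁻¹ * V2 * S⁻¹) := by
    apply Matrix.inv_eq_right_inv
    rw [hρ]
    rw [Matrix.smul_mul, Matrix.mul_smul, smul_smul, mul_inv_cancel₀ hKne, one_smul]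
    calc S * V2⁻¹ * S * (S⁻¹ * V2 * S⁻¹)
        = S * V2⁻¹ * (S * S⁻¹) * V2 * S⁻¹ := by noncomm_ring
      _ = 1 := by rw [hSS, Matrix.mul_one, Matrix.mul_assoc, Matrix.mul_assoc, ← Matrix.mul_assoc V2⁻¹, hV2inv, Matrix.one_mul, hSS]
  have hSρS : S * ρ⁻¹ * S = K⁻¹ • V2 := by
    rw [hρinv, Matrix.mul_smul, Matrix.smul_mul]
    congr 1
    calc S * (S⁻¹ * V2 * S⁻¹) * S = (S * S⁻¹) * V2 * (S⁻¹ * S) := by noncomm_ring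
      _ = V2 := by rw [hSS, hSS', Matrix.one_mul, Matrix.mul_one]
  have hKey : K * (n ⬝ᵥ (S * ρ⁻¹ * S).mulVec n) = n ⬝ᵥ V2.mulVec n := by
    rw [hSρS, Matrix.smul_mulVec, dotProduct_smul, smul_eq_mul,
      ← mul_assoc, mul_inv_cancel₀ hKne, one_mul]
  have hquad : n ⬝ᵥ V2.mulVec n = Fᵀ.mulVec n ⬝ᵥ Fᵀ.mulVec n := by
    rw [hV2, ← Matrix.mulVec_mulVec, Matrix.dotProduct_mulVec, ← Matrix.mulVec_transpose]
  set q : ℝ := Fᵀ.mulVec n ⬝ᵥ Fᵀ.mulVec n with hq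
  have hFn : Fᵀ.mulVec n ≠ 0 := by
    intro h
    have hn0 : n ≠ 0 := by intro h0; rw [h0] at hn; simp at hn
    have hFtdet : IsUnit Fᵀ.det := by
      rw [Matrix.det_transpose]; exact isUnit_iff_ne_zero.mpr (ne_of_gt hdet)
    have := congrArg (Fᵀ⁻¹.mulVec) h
    rw [Matrix.mulVec_mulVec, Matrix.nonsing_inv_mul Fᵀ hFtdet, Matrix.one_mulVec,
      Matrix.mulVec_zero] at this
    exact hn0 this
  have hqpos : 0 < q := by
    have h2 : q ≠ 0 := fun h => hFn (dotProduct_self_eq_zero.mp h)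
    have h1 : 0 ≤ q := Finset.sum_nonneg fun i _ => mul_self_nonneg _
    exact lt_of_le_of_ne h1 (Ne.symm h2)
  have hvq : v = Real.sqrt q := by rw [hv, hKey, hquad]
  have hv2 : v ^ 2 = q := by rw [hvq, Real.sq_sqrt hqpos.le]
  have hsq : Real.sqrt q ≠ 0 := by positivity
  refine ⟨by rw [hv2, hKey, hquad], by rw [hv2, hquad], hv2, ?_, ?_⟩
  · rw [hN, dotProduct_smul, smul_dotProduct, ← hq, smul_eq_mul, smul_eq_mul,
      ← mul_assoc, ← mul_inv]
    rw [← Real.sqrt_mul_self hqpos.le]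
    field_simp
    rw [Real.sq_sqrt (Real.sqrt_nonneg _)]
  · rw [hc, hN, hvq, hV2]
    simp [Matrix.mulVec_smul, Matrix.mulVec_mulVec]
end

section
/- Let f : [a,b] → ℝ be C¹ with f' > 0, f > 0 (a 2D near-cloak). The normalized 2D radial mass m_r := (2/(b²−a²)) ∫_a^b r ρ_r dr with ρ_r = f'(r)·(r/f(r)) satisfies m_r = (2/(b²−a²)) [ b² ln f(b) − a² ln f(a) − 2∫_a^b r ln f(r) dr ]. Consequently, if f(b) = b is fixed and f(a) → 0⁺ (with f bounded), m_r → +∞. -/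
open MeasureTheory

lemma parts_aux (a b : ℝ) (ha : 0 < a) (hab : a < b)
    (f f' : ℝ → ℝ)
    (hderiv : ∀ r ∈ Set.Icc a b, HasDerivAt f (f' r) r)
    (hcont : ContinuousOn f' (Set.Icc a b))
    (hfpos : ∀ r ∈ Set.Icc a b, 0 < f r) :
    (∫ r in a..b, r * (f' r * (r / f r)))
      = b ^ 2 * Real.log (f b) - a ^ 2 * Real.log (f a)
        - 2 * ∫ r in a..b, r * Real.log (f r) := by
  have hle : a ≤ b := hab.le
  have huIcc : Set.uIcc a b = Set.Icc a b := Set.uIcc_of_le hle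
  have hfc : ContinuousOn f (Set.Icc a b) := fun x hx =>
    ((hderiv x hx).continuousAt).continuousWithinAt
  have hne : ∀ r ∈ Set.Icc a b, f r ≠ 0 := fun r hr => (hfpos r hr).ne'
  have hlogc : ContinuousOn (fun r => Real.log (f r)) (Set.Icc a b) := hfc.log hne
  have hG : ∀ x ∈ Set.uIcc a b,
      HasDerivAt (fun r => r ^ 2 * Real.log (f r))
        (2 * x * Real.log (f x) + x ^ 2 * (f' x / f x)) x := by
    intro x hx
    rw [huIcc] at hx
    have h1 : HasDerivAt (fun r : ℝ => r ^ 2) (2 * x) x := by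
      simpa using hasDerivAt_pow 2 x
    have h2 : HasDerivAt (fun r => Real.log (f r)) (f' x / f x) x :=
      (hderiv x hx).log (hne x hx)
    exact h1.mul h2
  have hc1 : ContinuousOn (fun x : ℝ => 2 * x * Real.log (f x)) (Set.Icc a b) :=
    (continuousOn_const.mul continuousOn_id).mul hlogc
  have hc2 : ContinuousOn (fun x : ℝ => x ^ 2 * (f' x / f x)) (Set.Icc a b) :=
    ((continuous_pow 2).continuousOn).mul (hcont.div hfc hne)
  have hint1 : IntervalIntegrable (fun x => 2 * x * Real.log (f x)) volume a b := by
    apply ContinuousOn.intervalIntegrable; rwa [huIcc]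
  have hint2 : IntervalIntegrable (fun x => x ^ 2 * (f' x / f x)) volume a b := by
    apply ContinuousOn.intervalIntegrable; rwa [huIcc]
  have key := intervalIntegral.integral_eq_sub_of_hasDerivAt hG (hint1.add hint2)
  rw [intervalIntegral.integral_add hint1 hint2] at key
  have h2x : (∫ x in a..b, 2 * x * Real.log (f x))
      = 2 * ∫ x in a..b, x * Real.log (f x) := by
    rw [← intervalIntegral.integral_const_mul]
    congr 1; ext x; ring
  have hcg : (∫ r in a..b, r * (f' r * (r / f r)))
      = ∫ x in a..b, x ^ 2 * (f' x / f x) := by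
    apply intervalIntegral.integral_congr
    intro x hx; ring
  rw [h2x] at key
  rw [hcg]
  linarith


/-- For a 2D near-cloak on `[a,b]` with `ρ_r = f'·(r/f)`, the
normalized radial mass `m_r = (2/(b²−a²)) ∫_a^b r ρ_r dr` satisfies
`m_r = (2/(b²−a²)) [ b² ln f(b) − a² ln f(a) − 2∫_a^b r ln f(r) dr ]`.
Consequently, with `f(b) = b` fixed and `f` bounded, `m_r → +∞` as `f(a) → 0⁺`. -/
theorem radial_mass_2d (a b : ℝ) (ha : 0 < a) (hab : a < b) :
    (∀ f f' : ℝ → ℝ,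
      (∀ r ∈ Set.Icc a b, HasDerivAt f (f' r) r) →
      ContinuousOn f' (Set.Icc a b) →
      (∀ r ∈ Set.Icc a b, 0 < f r) →
      (∀ r ∈ Set.Icc a b, 0 < f' r) →
      (2 / (b ^ 2 - a ^ 2)) * ∫ r in a..b, r * (f' r * (r / f r))
        = (2 / (b ^ 2 - a ^ 2)) *
          (b ^ 2 * Real.log (f b) - a ^ 2 * Real.log (f a)
            - 2 * ∫ r in a..b, r * Real.log (f r)))
    ∧
    (∀ Bnd M : ℝ, ∃ δ > 0, ∀ f f' : ℝ → ℝ,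
      (∀ r ∈ Set.Icc a b, HasDerivAt f (f' r) r) →
      ContinuousOn f' (Set.Icc a b) →
      (∀ r ∈ Set.Icc a b, 0 < f r) →
      (∀ r ∈ Set.Icc a b, 0 < f' r) →
      f b = b →
      (∀ r ∈ Set.Icc a b, f r ≤ Bnd) →
      f a < δ →
      (2 / (b ^ 2 - a ^ 2)) * (∫ r in a..b, r * (f' r * (r / f r))) > M) := by
  constructor
  · intro f f' hderiv hcont hfpos _
    rw [parts_aux a b ha hab f f' hderiv hcont hfpos]
  intro Bnd M
  have hba : (0:ℝ) < b ^ 2 - a ^ 2 := by nlinarith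
  obtain ⟨T, hT⟩ : ∃ T : ℝ, T = M * (b ^ 2 - a ^ 2) / 2 - b ^ 2 * Real.log b
      + (b ^ 2 - a ^ 2) * Real.log Bnd := ⟨_, rfl⟩
  refine ⟨Real.exp (-T / a ^ 2), Real.exp_pos _, ?_⟩
  intro f f' hderiv hcont hfpos hf'pos hfb hbnd hfa
  have hle : a ≤ b := hab.le
  have haI : a ∈ Set.Icc a b := ⟨le_rfl, hle⟩
  have hbI : b ∈ Set.Icc a b := ⟨hle, le_rfl⟩
  have hfc : ContinuousOn f (Set.Icc a b) := fun x hx =>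
    ((hderiv x hx).continuousAt).continuousWithinAt
  have hne : ∀ r ∈ Set.Icc a b, f r ≠ 0 := fun r hr => (hfpos r hr).ne'
  have heq := parts_aux a b ha hab f f' hderiv hcont hfpos
  -- bound the integral
  have hintf : IntervalIntegrable (fun r => r * Real.log (f r)) volume a b := by
    apply ContinuousOn.intervalIntegrable
    rw [Set.uIcc_of_le hle]
    exact continuousOn_id.mul (hfc.log hne)
  have hintc : IntervalIntegrable (fun r : ℝ => r * Real.log Bnd) volume a b :=
    (continuous_id.mul continuous_const).intervalIntegrable a b
  have hI : (∫ r in a..b, r * Real.log (f r)) ≤ (b ^ 2 - a ^ 2) / 2 * Real.log Bnd := by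
    have h1 : (∫ r in a..b, r * Real.log (f r)) ≤ ∫ r in a..b, r * Real.log Bnd := by
      apply intervalIntegral.integral_mono_on hle hintf hintc
      intro x hx
      have hx0 : (0:ℝ) < x := lt_of_lt_of_le ha hx.1
      exact mul_le_mul_of_nonneg_left
        (Real.log_le_log (hfpos x hx) (hbnd x hx)) hx0.le
    have h2 : (∫ r in a..b, r * Real.log Bnd)
        = (b ^ 2 - a ^ 2) / 2 * Real.log Bnd := by
      rw [intervalIntegral.integral_mul_const, integral_id]
    linarith
  have hla : Real.log (f a) < -T / a ^ 2 := by
    have := Real.log_lt_log (hfpos a haI) hfa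
    rwa [Real.log_exp] at this
  have ha2 : (0:ℝ) < a ^ 2 := by positivity
  have hla2 : a ^ 2 * Real.log (f a) < -T := by
    have h1 := mul_lt_mul_of_pos_left hla ha2
    have h2 : a ^ 2 * (-T / a ^ 2) = -T := by field_simp
    linarith
  have hX : b ^ 2 * Real.log (f b) - a ^ 2 * Real.log (f a)
      - 2 * (∫ r in a..b, r * Real.log (f r)) > M * (b ^ 2 - a ^ 2) / 2 := by
    rw [hfb]
    linarith
  rw [heq]
  have hc : (0:ℝ) < 2 / (b ^ 2 - a ^ 2) := by positivity
  have hcm : 2 / (b ^ 2 - a ^ 2) * (M * (b ^ 2 - a ^ 2) / 2) = M := by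
    field_simp
  calc M = 2 / (b ^ 2 - a ^ 2) * (M * (b ^ 2 - a ^ 2) / 2) := hcm.symm
    _ < _ := by exact mul_lt_mul_of_pos_left hX hc
end

section
/- Let Ĉ be a real symmetric 6×6 matrix (Voigt-normalized elasticity matrix) of rank one with nonnegative spectrum. Then there exist K > 0 and a symmetric 3×3 matrix S̃ with tr(S̃²) = 3 such that the fourth-order tensor C_{ijkl} corresponding to Ĉ satisfies C_{ijkl} = K S̃_{ij} S̃_{kl}, and K = (1/3) C_{ijij} = (1/3)(C₁₁+C₂₂+C₃₃+2C₄₄+2C₅₅+2C₆₆). -/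
open Matrix

/-- Voigt index map: 1↦11, 2↦22, 3↦33, 4↦23, 5↦31, 6↦12. -/
def voigtIdx : Fin 6 → Fin 3 × Fin 3 := ![(0,0), (1,1), (2,2), (1,2), (2,0), (0,1)]

/-- Voigt (Kelvin/Mandel) normalization coefficient: 1 for normal components,
`√2` for shear components. -/
noncomputable def voigtCoef : Fin 6 → ℝ := fun a =>
  if (voigtIdx a).1 = (voigtIdx a).2 then 1 else Real.sqrt 2

/-- Inverse Voigt map. -/
def pentaIdx : Fin 3 → Fin 3 → Fin 6 := fun i j => ![![0,5,4],![5,1,3],![4,3,2]] i j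

lemma pentaIdx_symm : ∀ i j, pentaIdx i j = pentaIdx j i := by decide

lemma pentaIdx_voigtIdx : ∀ a, pentaIdx (voigtIdx a).1 (voigtIdx a).2 = a := by decide

lemma voigtCoef_ne_zero : ∀ a, voigtCoef a ≠ 0 := by
  intro a
  unfold voigtCoef
  split
  · norm_num
  · positivity

lemma rank_one_psd_decomp {n : ℕ} (A : Matrix (Fin n) (Fin n) ℝ)
    (hrank : A.rank = 1) (hpsd : A.PosSemidef) :
    ∃ v : Fin n → ℝ, ∀ a b, A a b = v a * v b := by
  have hsym : ∀ a b, A a b = A b a := by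
    intro a b
    have := hpsd.1
    rw [Matrix.IsHermitian] at this
    conv_lhs => rw [← this]
    simp [Matrix.conjTranspose_apply]
  obtain ⟨v₀, hv₀ne, hv₀⟩ := finrank_eq_one_iff'.mp hrank
  have hcol : ∀ b : Fin n, ∃ c : ℝ, ∀ a, A a b = c * (v₀ : Fin n → ℝ) a := by
    intro b
    have hmem : A.mulVec (Pi.single b 1) ∈ LinearMap.range A.mulVecLin :=
      ⟨Pi.single b 1, rfl⟩
    obtain ⟨c, hc⟩ := hv₀ ⟨_, hmem⟩
    refine ⟨c, fun a => ?_⟩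
    have := congrFun (congrArg (Subtype.val) hc) a
    simpa [Matrix.mulVec_single] using this.symm
  choose w hw using hcol
  set v : Fin n → ℝ := (v₀ : Fin n → ℝ) with hv
  have hvne : v ≠ 0 := by
    intro h
    exact hv₀ne (Subtype.ext (by simpa [hv] using h))
  obtain ⟨a0, ha0⟩ : ∃ a0, v a0 ≠ 0 := by
    by_contra h
    push_neg at h
    exact hvne (funext fun a => h a)
  have hsymm' : ∀ a b, w b * v a = w a * v b := by
    intro a b
    have h1 := hw b a
    have h2 := hw a b
    rw [← h1, ← h2]
    exact hsym a b
  set t : ℝ := w a0 / v a0 with ht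
  have hwt : ∀ b, w b = t * v b := by
    intro b
    have := hsymm' a0 b
    rw [ht, div_mul_eq_mul_div, eq_div_iff ha0]
    linarith [this]
  have hA : ∀ a b, A a b = t * v a * v b := by
    intro a b
    rw [hw b a, hwt b]; ring
  have htne : t ≠ 0 := by
    intro h
    have : A = 0 := by
      ext a b; simp [hA, h]
    rw [this] at hrank
    simp [Matrix.rank_zero] at hrank
  have htpos : 0 < t := by
    rcases lt_or_gt_of_ne htne with h | h
    · exfalso
      have := hpsd.dotProduct_mulVec_nonneg (Pi.single a0 1)
      have hd : (Pi.single a0 1 : Fin n → ℝ) ⬝ᵥ A.mulVec (Pi.single a0 1) = t * v a0 * v a0 := by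
        simp [Matrix.mulVec_single, dotProduct, Pi.single_apply, hA]
      simp only [star_trivial] at this
      rw [hd] at this
      nlinarith [sq_nonneg (v a0), mul_self_pos.mpr ha0]
    · exact h
  refine ⟨fun a => Real.sqrt t * v a, fun a b => ?_⟩
  rw [hA a b]
  have : Real.sqrt t * Real.sqrt t = t := Real.mul_self_sqrt htpos.le
  rw [show (Real.sqrt t * v a) * (Real.sqrt t * v b) = (Real.sqrt t * Real.sqrt t) * (v a * v b) by ring, this]
  ring

/-- if the Voigt-normalized 6×6 elasticity matrix `Chat` of a
fourth-order tensor `C` with the usual symmetries is rank one with nonnegative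
spectrum (positive semidefinite), then there exist `K > 0` and a symmetric 3×3
matrix `S̃` with `tr(S̃²) = 3` such that `C_{ijkl} = K S̃_{ij} S̃_{kl}`, and
`K = (1/3) C_{ijij}`. -/
theorem pentamode_decomposition
    (C : Fin 3 → Fin 3 → Fin 3 → Fin 3 → ℝ)
    (hsym1 : ∀ i j k l, C i j k l = C j i k l)
    (hsym2 : ∀ i j k l, C i j k l = C i j l k)
    (hsym3 : ∀ i j k l, C i j k l = C k l i j)
    (Chat : Matrix (Fin 6) (Fin 6) ℝ)
    (hChat : ∀ a b : Fin 6, Chat a b = voigtCoef a * voigtCoef b *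
      C (voigtIdx a).1 (voigtIdx a).2 (voigtIdx b).1 (voigtIdx b).2)
    (hrank : Chat.rank = 1) (hpsd : Chat.PosSemidef) :
    ∃ K : ℝ, 0 < K ∧ ∃ St : Matrix (Fin 3) (Fin 3) ℝ, St.IsSymm ∧
      Matrix.trace (St * St) = 3 ∧
      (∀ i j k l, C i j k l = K * St i j * St k l) ∧
      K = (1 / 3) * ∑ i : Fin 3, ∑ j : Fin 3, C i j i j := by
  obtain ⟨v, hv⟩ := rank_one_psd_decomp Chat hrank hpsd
  set s : Fin 3 → Fin 3 → ℝ := fun i j => v (pentaIdx i j) / voigtCoef (pentaIdx i j) with hs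
  have hsv : ∀ a, voigtCoef a * s (voigtIdx a).1 (voigtIdx a).2 = v a := by
    intro a
    rw [hs]
    simp only [pentaIdx_voigtIdx a]
    field_simp [voigtCoef_ne_zero a]
  have hkey : ∀ a b : Fin 6, C (voigtIdx a).1 (voigtIdx a).2 (voigtIdx b).1 (voigtIdx b).2
      = s (voigtIdx a).1 (voigtIdx a).2 * s (voigtIdx b).1 (voigtIdx b).2 := by
    intro a b
    have h := hChat a b
    rw [hv a b, ← hsv a, ← hsv b] at h
    have ha := voigtCoef_ne_zero a
    have hb := voigtCoef_ne_zero b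
    have h2 : (voigtCoef a * voigtCoef b) * (s (voigtIdx a).1 (voigtIdx a).2 * s (voigtIdx b).1 (voigtIdx b).2)
        = (voigtCoef a * voigtCoef b) * C (voigtIdx a).1 (voigtIdx a).2 (voigtIdx b).1 (voigtIdx b).2 := by
      linear_combination h
    exact (mul_left_cancel₀ (mul_ne_zero ha hb) h2).symm
  have hss : ∀ i j, s i j = s j i := by
    intro i j
    rw [hs]
    simp only [pentaIdx_symm i j]
  have hcov : ∀ i j : Fin 3, (i,j) = voigtIdx (pentaIdx i j) ∨ (j,i) = voigtIdx (pentaIdx i j) := by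
    decide
  have hCs : ∀ i j k l, C i j k l = s i j * s k l := by
    intro i j k l
    have h := hkey (pentaIdx i j) (pentaIdx k l)
    rcases hcov i j with hij | hij <;> rcases hcov k l with hkl | hkl <;>
      rw [← hij, ← hkl] at h
    · exact h
    · rw [hsym2 i j k l]
      try simp only [hss k l] at h ⊢
      exact h
    · rw [hsym1 i j k l]
      try simp only [hss i j] at h ⊢
      exact h
    · rw [hsym1 i j k l, hsym2 j i k l]
      try simp only [hss i j] at h ⊢
      try simp only [hss k l] at h ⊢
      exact h
  -- total "trace" T
  set T : ℝ := ∑ i : Fin 3, ∑ j : Fin 3, C i j i j with hT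
  have hTs : T = ∑ i : Fin 3, ∑ j : Fin 3, s i j * s i j := by
    rw [hT]
    refine Finset.sum_congr rfl fun i _ => Finset.sum_congr rfl fun j _ => hCs i j i j
  have hTnonneg : 0 ≤ T := by
    rw [hTs]
    refine Finset.sum_nonneg fun i _ => Finset.sum_nonneg fun j _ => mul_self_nonneg _
  have hTpos : 0 < T := by
    rcases hTnonneg.lt_or_eq with h | h
    · exact h
    · exfalso
      -- T = 0 forces all s i j = 0, hence Chat = 0, contradicting rank = 1
      have hz : ∀ i j, s i j = 0 := by
        intro i j
        have h0 : ∑ i : Fin 3, ∑ j : Fin 3, s i j * s i j = 0 := by rw [← hTs, ← h]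
        have h1 : ∀ i ∈ Finset.univ, (0:ℝ) ≤ ∑ j : Fin 3, s i j * s i j :=
          fun i _ => Finset.sum_nonneg fun j _ => mul_self_nonneg _
        have h2 := (Finset.sum_eq_zero_iff_of_nonneg h1).mp h0 i (Finset.mem_univ i)
        have h3 := (Finset.sum_eq_zero_iff_of_nonneg
          (fun j _ => mul_self_nonneg (s i j))).mp h2 j (Finset.mem_univ j)
        exact mul_self_eq_zero.mp h3
      have hC0 : Chat = 0 := by
        ext a b
        simp [hChat a b, hCs, hz]
      rw [hC0] at hrank
      simp at hrank
  have hsq : Real.sqrt (3/T) * Real.sqrt (3/T) = 3/T := Real.mul_self_sqrt (by positivity)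
  refine ⟨T/3, by positivity, Matrix.of (fun i j => Real.sqrt (3/T) * s i j), ?_, ?_, ?_, by rw [hT]; ring⟩
  · ext i j
    simp only [Matrix.transpose_apply, Matrix.of_apply, hss i j]
  · have hterm : ∀ i j : Fin 3, (Real.sqrt (3/T) * s i j) * (Real.sqrt (3/T) * s j i)
        = (3/T) * (s i j * s i j) := by
      intro i j
      rw [hss j i, show (Real.sqrt (3/T) * s i j) * (Real.sqrt (3/T) * s i j)
        = (Real.sqrt (3/T) * Real.sqrt (3/T)) * (s i j * s i j) by ring, hsq]
    have : Matrix.trace (Matrix.of (fun i j => Real.sqrt (3/T) * s i j)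
        * Matrix.of (fun i j => Real.sqrt (3/T) * s i j))
        = ∑ i : Fin 3, ∑ j : Fin 3, (3/T) * (s i j * s i j) := by
      simp only [Matrix.trace, Matrix.diag, Matrix.mul_apply, Matrix.of_apply]
      exact Finset.sum_congr rfl fun i _ => Finset.sum_congr rfl fun j _ => hterm i j
    rw [this]
    simp only [← Finset.mul_sum]
    rw [← hTs]
    field_simp
  · intro i j k l
    rw [hCs i j k l]
    simp only [Matrix.of_apply]
    rw [show T/3 * (Real.sqrt (3/T) * s i j) * (Real.sqrt (3/T) * s k l)
      = (T/3 * (Real.sqrt (3/T) * Real.sqrt (3/T))) * (s i j * s k l) by ring, hsq]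
    rw [show T/3 * (3/T) = 1 by field_simp]
    ring
end

section
/- Consider an orthotropic pentamode elasticity tensor C = K S⊗S with S = diag(s₁, s₂, s₃) diagonal positive, and inertia ρ = diag(ρ₁, ρ₂, ρ₃) positive. Set C_{ii} = K s_i² and c_i² = C_{ii}/ρ_i. Then for any unit vector n = (n₁,n₂,n₃), the unique nonzero phase speed satisfies v² = c₁² n₁² + c₂² n₂² + c₃² n₃², and the group velocity is c = v⁻¹(c₁² n₁, c₂² n₂, c₃² n₃). In particular the slowness surface { s : s·diag(c₁²,c₂²,c₃²) s = 1 } is an ellipsoid. -/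
open Matrix

/-- For an orthotropic pentamode with `C = K S⊗S`,
`S = diag(s₁,s₂,s₃)` positive, inertia `ρ = diag(ρ₁,ρ₂,ρ₃)` positive, and
`c_i² = K s_i²/ρ_i`, the unique nonzero phase speed for a unit vector `n` satisfies
`v² = c₁²n₁² + c₂²n₂² + c₃²n₃²` and the group velocity is
`c = v⁻¹ (c₁²n₁, c₂²n₂, c₃²n₃)`. -/
theorem orthotropic_pentamode_speeds (K : ℝ) (hK : 0 < K)
    (s ρv : Fin 3 → ℝ) (hs : ∀ i, 0 < s i) (hρv : ∀ i, 0 < ρv i)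
    (S ρ : Matrix (Fin 3) (Fin 3) ℝ) (hS : S = diagonal s) (hρ : ρ = diagonal ρv)
    (n : Fin 3 → ℝ) (hn : n ⬝ᵥ n = 1)
    (c2 : Fin 3 → ℝ) (hc2 : ∀ i, c2 i = K * (s i) ^ 2 / ρv i)
    (v : ℝ) (hv : v = Real.sqrt (K * (n ⬝ᵥ (S * ρ⁻¹ * S).mulVec n)))
    (c : Fin 3 → ℝ) (hc : c = v⁻¹ • (K • (S * ρ⁻¹ * S).mulVec n)) :
    v ^ 2 = ∑ i, c2 i * (n i) ^ 2 ∧ (∀ i, c i = v⁻¹ * (c2 i * n i)) := by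
  have hM : S * ρ⁻¹ * S = diagonal (fun i => s i ^ 2 / ρv i) := by
    have hρinv : ρ⁻¹ = diagonal (fun i => (ρv i)⁻¹) := by
      apply Matrix.inv_eq_right_inv
      rw [hρ, diagonal_mul_diagonal]
      convert Matrix.diagonal_one using 2
      exact funext fun i => mul_inv_cancel₀ (hρv i).ne'
    rw [hS, hρinv, diagonal_mul_diagonal, diagonal_mul_diagonal,
      Matrix.diagonal_eq_diagonal_iff]
    intro i
    field_simp
  have hq : K * (n ⬝ᵥ (S * ρ⁻¹ * S).mulVec n) = ∑ i, c2 i * (n i) ^ 2 := by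
    rw [hM]
    simp only [dotProduct, mulVec_diagonal, Finset.mul_sum]
    refine Finset.sum_congr rfl fun i _ => ?_
    rw [hc2]
    ring
  have hnonneg : 0 ≤ ∑ i, c2 i * (n i) ^ 2 := by
    refine Finset.sum_nonneg fun i _ => ?_
    have : 0 ≤ c2 i := by
      rw [hc2]
      have := (hρv i).le
      positivity
    positivity
  constructor
  · rw [hv, sq, Real.mul_self_sqrt (by rw [hq]; exact hnonneg), hq]
  · intro i
    rw [hc]
    simp only [Pi.smul_apply, smul_eq_mul, hM, mulVec_diagonal, hc2]
    ring
end

section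
/- Let χ : Ω → ω be a C² diffeomorphism with deformation gradient F and V² = F Fᵀ. Fix a unit vector N and X₀ ∈ Ω, and let x(τ) = χ(X₀ + τ N) be the image of the straight line. Define s(τ) = F⁻ᵀ N evaluated along the curve. Then x and s satisfy the ray (geodesic) ODE system: dx/dτ = V² s and ds_k/dτ = −(1/2) s_i (∂(V²)_{ij}/∂x_k) s_j; moreover the quantity s·V² s is constant along the curve and equals 1. -/
open Matrix

lemma clm_eval {d : ℕ} {M : Type*} [NormedAddCommGroup M] [NormedSpace ℝ M]
    (L : (Fin d → ℝ) →L[ℝ] M) (v : Fin d → ℝ) :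
    L v = ∑ I, v I • L (Pi.single I 1) := by
  have hv : v = ∑ I, v I • (Pi.single I 1 : Fin d → ℝ) := by
    funext j
    simp [Finset.sum_apply, Pi.single_apply]
  calc L v = L (∑ I, v I • (Pi.single I 1 : Fin d → ℝ)) := by rw [← hv]
    _ = ∑ I, v I • L (Pi.single I 1) := by rw [map_sum]; simp

set_option maxHeartbeats 1000000 in
/-- Let `χ : Ω → ω` be a C² diffeomorphism with deformation gradient
`F` and `V² = F Fᵀ` (as a field on `ω`).  For a unit vector `N` and `X₀ ∈ Ω`, let
`x(τ) = χ(X₀ + τ N)` and `s(τ) = F⁻ᵀ N` along the curve.  Then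
`dx/dτ = V² s`, `ds_k/dτ = −(1/2) s_i ∂(V²)_{ij}/∂x_k s_j`, and `s·V²s = 1`. -/
theorem straight_lines_map_to_rays {d : ℕ}
    (Ω ω : Set (Fin d → ℝ)) (hΩ : IsOpen Ω) (hω : IsOpen ω)
    (χ ψ : (Fin d → ℝ) → (Fin d → ℝ))
    (hχ : ContDiffOn ℝ 2 χ Ω) (hψ : ContDiffOn ℝ 2 ψ ω)
    (hmaps : Set.MapsTo χ Ω ω) (hmaps' : Set.MapsTo ψ ω Ω)
    (hinv : ∀ x ∈ ω, χ (ψ x) = x) (hinv' : ∀ X ∈ Ω, ψ (χ X) = X)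
    (F : (Fin d → ℝ) → Matrix (Fin d) (Fin d) ℝ)
    (hF : ∀ X, F X = Matrix.of fun i I => fderiv ℝ χ X (Pi.single I 1) i)
    (hFunit : ∀ X ∈ Ω, IsUnit (F X))
    (V2 : (Fin d → ℝ) → Matrix (Fin d) (Fin d) ℝ)
    (hV2 : ∀ x, V2 x = F (ψ x) * (F (ψ x))ᵀ)
    (N : Fin d → ℝ) (hN : N ⬝ᵥ N = 1) (X₀ : Fin d → ℝ)
    (x : ℝ → (Fin d → ℝ)) (hx : ∀ τ, x τ = χ (X₀ + τ • N))
    (s : ℝ → (Fin d → ℝ)) (hs : ∀ τ, s τ = ((F (X₀ + τ • N))⁻¹)ᵀ.mulVec N)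
    (τ₀ : ℝ) (hτ₀ : X₀ + τ₀ • N ∈ Ω) :
    HasDerivAt x ((V2 (x τ₀)).mulVec (s τ₀)) τ₀ ∧
    HasDerivAt s (fun k =>
      -(1 / 2) * ∑ i : Fin d, ∑ j : Fin d,
        s τ₀ i * fderiv ℝ (fun y => V2 y i j) (x τ₀) (Pi.single k 1) * s τ₀ j) τ₀ ∧
    s τ₀ ⬝ᵥ (V2 (x τ₀)).mulVec (s τ₀) = 1 := by
  have hXΩ : X₀ + τ₀ • N ∈ Ω := hτ₀
  set X : Fin d → ℝ := X₀ + τ₀ • N with hXdef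
  have hy₀χ : x τ₀ = χ X := hx τ₀
  set y₀ : Fin d → ℝ := x τ₀ with hy₀def
  have hy₀ω : y₀ ∈ ω := hy₀χ ▸ hmaps hXΩ
  have hψX : ψ y₀ = X := by rw [hy₀χ]; exact hinv' X hXΩ
  -- pointwise differentiability
  have hχdiff : ∀ Y ∈ Ω, DifferentiableAt ℝ χ Y := fun Y hY =>
    (hχ.differentiableOn (by norm_num)).differentiableAt (hΩ.mem_nhds hY)
  have hψdiff : ∀ y ∈ ω, DifferentiableAt ℝ ψ y := fun y hy =>
    (hψ.differentiableOn (by norm_num)).differentiableAt (hω.mem_nhds hy)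
  -- derivative of inverse map identity
  have key2 : ∀ Y ∈ Ω, ∀ v, fderiv ℝ ψ (χ Y) (fderiv ℝ χ Y v) = v := by
    intro Y hY v
    have hcomp : fderiv ℝ (ψ ∘ χ) Y = (fderiv ℝ ψ (χ Y)).comp (fderiv ℝ χ Y) :=
      fderiv_comp Y (hψdiff _ (hmaps hY)) (hχdiff Y hY)
    have hev : (ψ ∘ χ) =ᶠ[nhds Y] id := by
      filter_upwards [hΩ.mem_nhds hY] with Z hZ
      exact hinv' Z hZ
    have hid : fderiv ℝ (ψ ∘ χ) Y = ContinuousLinearMap.id ℝ (Fin d → ℝ) := by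
      rw [hev.fderiv_eq, fderiv_id]
    have h := hcomp.symm.trans hid
    have := ContinuousLinearMap.ext_iff.mp h v
    simpa using this
  -- matrix-vector bridge
  have hFmv : ∀ Y (v : Fin d → ℝ), (F Y).mulVec v = fderiv ℝ χ Y v := by
    intro Y v
    funext i
    rw [clm_eval (fderiv ℝ χ Y) v]
    simp [hF, Matrix.mulVec, dotProduct, Finset.sum_apply, mul_comm]
  -- inverse formula
  have hGinv : ∀ Y ∈ Ω, (F Y)⁻¹ =
      Matrix.of fun I k => fderiv ℝ ψ (χ Y) (Pi.single k 1) I := by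
    intro Y hY
    refine Matrix.inv_eq_left_inv ?_
    ext I J
    rw [Matrix.mul_apply]
    calc ∑ k, (Matrix.of fun I k => fderiv ℝ ψ (χ Y) (Pi.single k 1) I) I k * F Y k J
        = ∑ k, fderiv ℝ χ Y (Pi.single J 1) k • fderiv ℝ ψ (χ Y) (Pi.single k 1) I := by
          apply Finset.sum_congr rfl; intro k _
          rw [hF]
          simp [mul_comm]
      _ = (∑ k, fderiv ℝ χ Y (Pi.single J 1) k • fderiv ℝ ψ (χ Y) (Pi.single k 1)) I := by
          rw [Finset.sum_apply]; rfl
      _ = fderiv ℝ ψ (χ Y) (fderiv ℝ χ Y (Pi.single J 1)) I := by rw [← clm_eval]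
      _ = (Pi.single J 1 : Fin d → ℝ) I := by rw [key2 Y hY]
      _ = (1 : Matrix (Fin d) (Fin d) ℝ) I J := by
          simp [Matrix.one_apply, Pi.single_apply]
  -- the spatial field s̃
  set g : Fin d → (Fin d → ℝ) → ℝ := fun k y => N ⬝ᵥ fderiv ℝ ψ y (Pi.single k 1) with hgdef
  have hsg : ∀ Y ∈ Ω, ∀ k, (((F Y)⁻¹)ᵀ.mulVec N) k = g k (χ Y) := by
    intro Y hY k
    rw [hGinv Y hY]
    simp [hgdef, Matrix.mulVec, dotProduct, Matrix.transpose_apply, mul_comm]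
  have hs0 : s τ₀ = ((F X)⁻¹)ᵀ.mulVec N := by rw [hs τ₀]
  have hsy₀ : s τ₀ = fun k => g k y₀ := by
    funext k
    rw [hs0]
    rw [hy₀def, show x τ₀ = χ X from hy₀χ]
    exact hsg X hXΩ k
  -- claim 1
  have hdet : IsUnit (F X).det := (Matrix.isUnit_iff_isUnit_det _).mp (hFunit X hXΩ)
  have hFTinv : (F X)ᵀ * ((F X)⁻¹)ᵀ = 1 := by
    rw [← Matrix.transpose_mul, Matrix.nonsing_inv_mul _ hdet, Matrix.transpose_one]
  have hvel : (V2 y₀).mulVec (s τ₀) = (F X).mulVec N := by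
    rw [hV2, hψX, hs0]
    calc (F X * (F X)ᵀ).mulVec ((((F X)⁻¹)ᵀ).mulVec N)
        = ((F X * (F X)ᵀ) * ((F X)⁻¹)ᵀ).mulVec N := by rw [Matrix.mulVec_mulVec]
      _ = (F X * ((F X)ᵀ * ((F X)⁻¹)ᵀ)).mulVec N := by rw [Matrix.mul_assoc]
      _ = (F X).mulVec N := by rw [hFTinv, Matrix.mul_one]
  have hxline : HasDerivAt (fun τ : ℝ => X₀ + τ • N) N τ₀ := by
    simpa using ((hasDerivAt_id τ₀).smul_const N).const_add X₀
  have claim1 : HasDerivAt x ((V2 y₀).mulVec (s τ₀)) τ₀ := by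
    rw [hvel, hFmv]
    have h := (hχdiff X hXΩ).hasFDerivAt.comp_hasDerivAt τ₀ hxline
    have hxeq : x = fun τ => χ (X₀ + τ • N) := funext hx
    rw [hxeq]
    exact h
  -- claim 3
  have claim3 : s τ₀ ⬝ᵥ (V2 y₀).mulVec (s τ₀) = 1 := by
    rw [hvel, hs0, Matrix.mulVec_transpose, Matrix.dotProduct_mulVec, Matrix.vecMul_vecMul,
      Matrix.nonsing_inv_mul _ hdet, Matrix.vecMul_one, hN]
  refine ⟨claim1, ?_, claim3⟩
  -- ============ claim 2 ============
  -- eikonal identity on ω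
  have hE1 : ∀ y ∈ ω, (fun k => g k y) ⬝ᵥ (V2 y).mulVec (fun k => g k y) = 1 := by
    intro y hy
    have hYΩ : ψ y ∈ Ω := hmaps' hy
    have hdetY : IsUnit (F (ψ y)).det := (Matrix.isUnit_iff_isUnit_det _).mp (hFunit _ hYΩ)
    have hsy : (fun k => g k y) = ((F (ψ y))⁻¹)ᵀ.mulVec N := by
      funext k
      have h := hsg (ψ y) hYΩ k
      rw [hinv y hy] at h
      exact h.symm
    have hFT : (F (ψ y))ᵀ * ((F (ψ y))⁻¹)ᵀ = 1 := by
      rw [← Matrix.transpose_mul, Matrix.nonsing_inv_mul _ hdetY, Matrix.transpose_one]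
    rw [hsy, hV2]
    rw [Matrix.mulVec_mulVec, Matrix.mul_assoc, hFT, Matrix.mul_one]
    rw [Matrix.mulVec_transpose, Matrix.dotProduct_mulVec, Matrix.vecMul_vecMul,
      Matrix.nonsing_inv_mul _ hdetY, Matrix.vecMul_one, hN]
  -- C¹ facts about the derivative fields
  have hψC1 : ContDiffOn ℝ 1 (fun y => fderiv ℝ ψ y) ω :=
    hψ.fderiv_of_isOpen hω (by norm_num)
  have hχC1 : ContDiffOn ℝ 1 (fun Y => fderiv ℝ χ Y) Ω :=
    hχ.fderiv_of_isOpen hΩ (by norm_num)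
  have hDψdiff : DifferentiableAt ℝ (fun y => fderiv ℝ ψ y) y₀ :=
    (hψC1.differentiableOn (by norm_num)).differentiableAt (hω.mem_nhds hy₀ω)
  set H := fderiv ℝ (fun y => fderiv ℝ ψ y) y₀ with hHdef
  have hHsymm : ∀ v w, H v w = H w v :=
    (hψ.contDiffAt (hω.mem_nhds hy₀ω)).isSymmSndFDerivAt (by simp)
  -- the dot-with-N continuous linear map
  set Ndot : (Fin d → ℝ) →L[ℝ] ℝ :=
    ∑ I, N I • (ContinuousLinearMap.proj I : (Fin d → ℝ) →L[ℝ] ℝ) with hNdotdef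
  have hNdot : ∀ v, Ndot v = N ⬝ᵥ v := by
    intro v
    simp [hNdotdef, dotProduct, ContinuousLinearMap.sum_apply]
  -- derivative of the field g i
  have hgH : ∀ i, HasFDerivAt (g i) (Ndot.comp (H.flip (Pi.single i 1))) y₀ := by
    intro i
    have h1 : HasFDerivAt (fun y => fderiv ℝ ψ y (Pi.single i 1))
        (H.flip (Pi.single i 1)) y₀ := by
      have := hDψdiff.hasFDerivAt.clm_apply
        (hasFDerivAt_const (Pi.single i 1 : Fin d → ℝ) y₀)
      simpa using this
    have h2 := Ndot.hasFDerivAt.comp y₀ h1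
    have hgeq : g i = fun y => Ndot (fderiv ℝ ψ y (Pi.single i 1)) := by
      funext y; rw [hNdot]
    rw [hgeq]
    exact h2
  have hgfd : ∀ i v, fderiv ℝ (g i) y₀ v = N ⬝ᵥ H v (Pi.single i 1) := by
    intro i v
    rw [(hgH i).fderiv]
    simp [hNdot]
  have hDgsymm : ∀ i j : Fin d,
      fderiv ℝ (g i) y₀ (Pi.single j 1) = fderiv ℝ (g j) y₀ (Pi.single i 1) := by
    intro i j
    rw [hgfd, hgfd, hHsymm]
  -- differentiability of V2 entries
  have hV2entry : ∀ i j : Fin d, (fun y => V2 y i j) =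
      fun y => ∑ J, fderiv ℝ χ (ψ y) (Pi.single J 1) i * fderiv ℝ χ (ψ y) (Pi.single J 1) j := by
    intro i j
    funext y
    rw [hV2, Matrix.mul_apply]
    apply Finset.sum_congr rfl
    intro J _
    rw [hF]
    rfl
  have hDχψ : DifferentiableAt ℝ (fun y => fderiv ℝ χ (ψ y)) y₀ := by
    have h1 : DifferentiableAt ℝ (fun Y => fderiv ℝ χ Y) (ψ y₀) := by
      rw [hψX]
      exact (hχC1.differentiableOn (by norm_num)).differentiableAt (hΩ.mem_nhds hXΩ)
    exact h1.comp y₀ (hψdiff y₀ hy₀ω)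
  have hWdiff : ∀ i j : Fin d, DifferentiableAt ℝ (fun y => V2 y i j) y₀ := by
    intro i j
    rw [hV2entry i j]
    apply DifferentiableAt.fun_sum
    intro J _
    have hJ : ∀ l : Fin d, DifferentiableAt ℝ (fun y => fderiv ℝ χ (ψ y) (Pi.single J 1) l) y₀ := by
      intro l
      have h2 : DifferentiableAt ℝ (fun y => fderiv ℝ χ (ψ y) (Pi.single J 1)) y₀ :=
        hDχψ.clm_apply (differentiableAt_const _)
      exact (ContinuousLinearMap.proj l : (Fin d → ℝ) →L[ℝ] ℝ).differentiableAt.comp y₀ h2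
    exact (hJ i).mul (hJ j)
  have hgd : ∀ i, DifferentiableAt ℝ (g i) y₀ := fun i => (hgH i).differentiableAt
  -- the eikonal identity has zero derivative
  have hEfd : fderiv ℝ (fun y => ∑ i, ∑ j, g i y * (V2 y i j * g j y)) y₀ = 0 := by
    have hev : (fun y => ∑ i, ∑ j, g i y * (V2 y i j * g j y)) =ᶠ[nhds y₀]
        (fun _ => (1 : ℝ)) := by
      filter_upwards [hω.mem_nhds hy₀ω] with y hy
      have h := hE1 y hy
      simpa [dotProduct, Matrix.mulVec, Finset.mul_sum] using h
    rw [hev.fderiv_eq]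
    exact fderiv_const_apply 1
  -- product rule expansion
  have hprod : HasFDerivAt (fun y => ∑ i, ∑ j, g i y * (V2 y i j * g j y))
      (∑ i, ∑ j, (g i y₀ • (V2 y₀ i j • fderiv ℝ (g j) y₀
          + g j y₀ • fderiv ℝ (fun y => V2 y i j) y₀)
        + (V2 y₀ i j * g j y₀) • fderiv ℝ (g i) y₀)) y₀ := by
    apply HasFDerivAt.fun_sum
    intro i _
    apply HasFDerivAt.fun_sum
    intro j _
    exact (hgd i).hasFDerivAt.mul ((hWdiff i j).hasFDerivAt.mul (hgd j).hasFDerivAt)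
  have hZ0 : (∑ i, ∑ j, (g i y₀ • (V2 y₀ i j • fderiv ℝ (g j) y₀
          + g j y₀ • fderiv ℝ (fun y => V2 y i j) y₀)
        + (V2 y₀ i j * g j y₀) • fderiv ℝ (g i) y₀)) = 0 := by
    rw [← hprod.fderiv]; exact hEfd
  -- symmetry of V2
  have hWsymm : ∀ i j : Fin d, V2 y₀ i j = V2 y₀ j i := by
    intro i j
    rw [congrFun (hV2entry i j) y₀, congrFun (hV2entry j i) y₀]
    exact Finset.sum_congr rfl fun J _ => mul_comm _ _
  -- assemble derivative of s
  rw [hasDerivAt_pi]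
  intro k
  -- scalar equation from hZ0 evaluated at e_k
  have hZ : ∑ i, ∑ j, (g i y₀ * (V2 y₀ i j * fderiv ℝ (g j) y₀ (Pi.single k 1)
        + g j y₀ * fderiv ℝ (fun y => V2 y i j) y₀ (Pi.single k 1))
      + (V2 y₀ i j * g j y₀) * fderiv ℝ (g i) y₀ (Pi.single k 1)) = 0 := by
    have := congrFun (congrArg DFunLike.coe hZ0) (Pi.single k 1)
    simpa [ContinuousLinearMap.sum_apply, ContinuousLinearMap.add_apply,
      ContinuousLinearMap.smul_apply, smul_eq_mul, mul_add] using this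
  -- derivative of τ ↦ s τ k
  have hcont : Continuous (fun τ : ℝ => X₀ + τ • N) :=
    continuous_const.add (continuous_id.smul continuous_const)
  have hevΩ : ∀ᶠ τ in nhds τ₀, X₀ + τ • N ∈ Ω :=
    hcont.continuousAt.eventually_mem (hΩ.mem_nhds hXΩ)
  have hev_s : (fun τ => s τ k) =ᶠ[nhds τ₀] fun τ => g k (x τ) := by
    filter_upwards [hevΩ] with τ hτ
    rw [hs τ, hx τ]
    exact hsg _ hτ k
  have hsk : HasDerivAt (fun τ => s τ k)
      (fderiv ℝ (g k) y₀ ((V2 y₀).mulVec (s τ₀))) τ₀ := by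
    have h1 : HasDerivAt (fun τ => g k (x τ))
        ((Ndot.comp (H.flip (Pi.single k 1))) ((V2 y₀).mulVec (s τ₀))) τ₀ :=
      (hgH k).comp_hasDerivAt τ₀ claim1
    rw [(hgH k).fderiv]
    exact h1.congr_of_eventuallyEq hev_s
  -- final algebra
  have hkey : fderiv ℝ (g k) y₀ ((V2 y₀).mulVec (s τ₀)) =
      -(1 / 2) * ∑ i, ∑ j,
        s τ₀ i * fderiv ℝ (fun y => V2 y i j) y₀ (Pi.single k 1) * s τ₀ j := by
    have hexpand : fderiv ℝ (g k) y₀ ((V2 y₀).mulVec (s τ₀)) =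
        ∑ i, ∑ j, (V2 y₀ i j * g j y₀) * fderiv ℝ (g i) y₀ (Pi.single k 1) := by
      rw [clm_eval (fderiv ℝ (g k) y₀) ((V2 y₀).mulVec (s τ₀))]
      rw [hsy₀]
      apply Finset.sum_congr rfl
      intro i _
      rw [smul_eq_mul, Matrix.mulVec, hDgsymm k i]
      rw [dotProduct, Finset.sum_mul]
    rw [hexpand, hsy₀]
    -- abbreviations
    have e1 : ∑ i, ∑ j, g i y₀ * (V2 y₀ i j * fderiv ℝ (g j) y₀ (Pi.single k 1))
        = ∑ i, ∑ j, (V2 y₀ i j * g j y₀) * fderiv ℝ (g i) y₀ (Pi.single k 1) := by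
      rw [Finset.sum_comm]
      apply Finset.sum_congr rfl; intro i _
      apply Finset.sum_congr rfl; intro j _
      rw [hWsymm j i]; ring
    have hZ' : (∑ i, ∑ j, g i y₀ * (V2 y₀ i j * fderiv ℝ (g j) y₀ (Pi.single k 1)))
        + (∑ i, ∑ j, g i y₀ * (g j y₀ * fderiv ℝ (fun y => V2 y i j) y₀ (Pi.single k 1)))
        + (∑ i, ∑ j, (V2 y₀ i j * g j y₀) * fderiv ℝ (g i) y₀ (Pi.single k 1)) = 0 := by
      rw [← hZ]
      rw [← Finset.sum_add_distrib, ← Finset.sum_add_distrib]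
      apply Finset.sum_congr rfl; intro i _
      rw [← Finset.sum_add_distrib, ← Finset.sum_add_distrib]
      apply Finset.sum_congr rfl; intro j _
      ring
    rw [e1] at hZ'
    have e2 : ∑ i, ∑ j, (fun k => g k y₀) i *
          fderiv ℝ (fun y => V2 y i j) y₀ (Pi.single k 1) * (fun k => g k y₀) j
        = ∑ i, ∑ j, g i y₀ * (g j y₀ * fderiv ℝ (fun y => V2 y i j) y₀ (Pi.single k 1)) := by
      apply Finset.sum_congr rfl; intro i _
      apply Finset.sum_congr rfl; intro j _
      ring
    rw [e2]
    linarith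
  rw [← hkey]
  exact hsk
end
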